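/- arXiv:math/9902048 — 2 statements merged into one kernel-verified Lean document; each statement's English description precedes it below -/
import Mathlib

section
/- Let G be a cyclic group of prime power order p^r with generator x. If p is odd, the elements [x, x^i, x^{p^r−1−i}] for i = 1,…,(p^r−1)/2 form a ℤ-basis of 𝔹_G, i.e., 𝔹_G is a free abelian group freely generated by these elements. If p = 2 (and p^r > 2), the elements [x, x^i, x^{2^r−1−i}] for i = 1,…,2^{r−1}−1 form a ℤ-basis of 𝔹_G. -/
namespace SingOrbit

variable (G : Type*) [Group G]

/-- The map from conjugacy classes to the abelianization. -/
def classAb : ConjClasses G → Additive (Abelianization G) :=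
  Quotient.lift (fun g : G => Additive.ofMul (Abelianization.of g)) <| by
    intro a b hab
    obtain ⟨c, hc⟩ := isConj_iff.mp (hab : IsConj a b)
    subst hc
    show Additive.ofMul (Abelianization.of a) = Additive.ofMul (Abelianization.of (c * a * c⁻¹))
    congr 1
    rw [map_mul, map_mul, map_inv, mul_comm (Abelianization.of c) (Abelianization.of a),
      mul_inv_cancel_right]

/-- Nontrivial conjugacy classes. -/
def NCC := {c : ConjClasses G // c ≠ 1}

/-- The homomorphism `φ` from the free abelian group on the nontrivial conjugacy classes
to the abelianization, sending a conjugacy class to the image of any representative. -/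
noncomputable def phi : FreeAbelianGroup (NCC G) →+ Additive (Abelianization G) :=
  FreeAbelianGroup.lift fun c => classAb G c.1

/-- The basis element of the free abelian group corresponding to a conjugacy class
(`0` for the trivial class). -/
noncomputable def clsC (c : ConjClasses G) : FreeAbelianGroup (NCC G) :=
  letI := Classical.dec (c = 1)
  if h : c = 1 then 0 else FreeAbelianGroup.of ⟨c, h⟩

/-- The basis element corresponding to the conjugacy class of a group element. -/
noncomputable def clsF (x : G) : FreeAbelianGroup (NCC G) := clsC G (ConjClasses.mk x)

/-- The subgroup generated by the elements `x̂ + x̂⁻¹`. -/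
noncomputable def NSub : AddSubgroup (FreeAbelianGroup (NCC G)) :=
  AddSubgroup.closure {a | ∃ x : G, a = clsF G x + clsF G x⁻¹}

/-- The group `𝔹_G` of singular orbit data: `(ker φ) / N`. -/
noncomputable def SOD := (phi G).ker ⧸ ((NSub G).addSubgroupOf (phi G).ker)

noncomputable instance : AddCommGroup (SOD G) :=
  inferInstanceAs (AddCommGroup ((phi G).ker ⧸ ((NSub G).addSubgroupOf (phi G).ker)))

variable {G}

lemma classAb_mk (x : G) :
    classAb G (ConjClasses.mk x) = Additive.ofMul (Abelianization.of x) := rfl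

lemma mk_eq_one_iff {x : G} : ConjClasses.mk x = 1 ↔ x = 1 := by
  rw [ConjClasses.one_eq_mk_one, ConjClasses.mk_eq_mk_iff_isConj, isConj_one_left]

lemma phi_of (c : NCC G) : phi G (FreeAbelianGroup.of c) = classAb G c.1 :=
  FreeAbelianGroup.lift_apply_of _ _

lemma phi_clsF (x : G) : phi G (clsF G x) = Additive.ofMul (Abelianization.of x) := by
  rw [clsF, clsC]
  split_ifs with h
  · have hx : x = 1 := mk_eq_one_iff.mp h
    subst hx
    simp
  · exact phi_of (G := G) ⟨_, h⟩

/-- The element of the free abelian group associated to a list of group elements. -/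
noncomputable def sumF (l : List G) : FreeAbelianGroup (NCC G) := (l.map (clsF G)).sum

lemma sumF_nil : sumF ([] : List G) = 0 := rfl

lemma sumF_cons (a : G) (t : List G) : sumF (a :: t) = clsF G a + sumF t := by
  simp [sumF]

lemma phi_sumF (l : List G) :
    phi G (sumF l) = Additive.ofMul (Abelianization.of l.prod) := by
  induction l with
  | nil => simp [sumF_nil]
  | cons a t ih =>
    rw [sumF_cons, map_add, phi_clsF, ih, List.prod_cons, map_mul, ofMul_mul]

lemma abOf_eq_one_iff {x : G} : Abelianization.of x = 1 ↔ x ∈ commutator G :=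
  QuotientGroup.eq_one_iff x

lemma sumF_mem_ker {l : List G} (h : l.prod ∈ commutator G) : sumF l ∈ (phi G).ker := by
  rw [AddMonoidHom.mem_ker, phi_sumF, abOf_eq_one_iff.mpr h]
  rfl

/-- The singular orbit datum `[x̂₁, …, x̂_q]` associated to a list of group elements whose
product lies in the commutator subgroup. -/
noncomputable def data (l : List G) (h : l.prod ∈ commutator G) : SOD G :=
  (QuotientAddGroup.mk ⟨sumF l, sumF_mem_ker h⟩ : SOD G)

lemma triple_pow_mem {G : Type*} [Group G] {x : G} {n a b : ℕ}
    (hx : x ^ n = 1) (h : 1 + a + b = n) :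
    ([x, x ^ a, x ^ b] : List G).prod ∈ commutator G := by
  have hprod : ([x, x ^ a, x ^ b] : List G).prod = 1 := by
    have h1 : ([x, x ^ a, x ^ b] : List G).prod = x ^ (1 + a + b) := by
      simp [pow_add, mul_assoc]
    rw [h1, h, hx]
  rw [hprod]
  exact Subgroup.one_mem _

/-! ### Auxiliary material -/

set_option linter.unusedSectionVars false

section Aux

variable {G : Type*} [Group G] [Fintype G]

/-- Discrete logarithm with base `x`. -/
noncomputable def dlog (x g : G) : ℕ :=
  letI := Classical.dec (∃ k, k < orderOf x ∧ x ^ k = g)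
  if h : ∃ k, k < orderOf x ∧ x ^ k = g then h.choose else 0

lemma dlog_spec {x g : G} (h : ∃ k, k < orderOf x ∧ x ^ k = g) :
    dlog x g < orderOf x ∧ x ^ dlog x g = g := by
  unfold dlog
  rw [dif_pos h]
  exact h.choose_spec

lemma exists_pow_eq (x : G) (hgen : ∀ g : G, g ∈ Subgroup.zpowers x) (g : G) :
    ∃ k, k < orderOf x ∧ x ^ k = g := by
  obtain ⟨j, hj⟩ := Subgroup.mem_zpowers_iff.mp (hgen g)
  have h1 : (0 : ℤ) < (orderOf x : ℤ) := by exact_mod_cast orderOf_pos x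
  have h2 := Int.emod_nonneg j (ne_of_gt h1)
  have h3 := Int.emod_lt_of_pos j h1
  refine ⟨(j % (orderOf x : ℤ)).toNat, by omega, ?_⟩
  rw [← zpow_natCast, Int.toNat_of_nonneg h2, zpow_mod_orderOf, hj]

lemma dlog_pow (x : G) {k : ℕ} (hk : k < orderOf x) : dlog x (x ^ k) = k := by
  have h : ∃ j, j < orderOf x ∧ x ^ j = x ^ k := ⟨k, hk, rfl⟩
  obtain ⟨h1, h2⟩ := dlog_spec h
  exact pow_injOn_Iio_orderOf h1 hk h2

/-- Exponent attached to a conjugacy class. -/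
noncomputable def nccExp (x : G) (c : ConjClasses G) : ℕ :=
  dlog x (ConjClasses.exists_rep c).choose

lemma nccExp_mk_pow (x : G) (hcomm : ∀ a b : G, a * b = b * a) {k : ℕ}
    (hk : k < orderOf x) : nccExp x (ConjClasses.mk (x ^ k)) = k := by
  have hrep := (ConjClasses.exists_rep (ConjClasses.mk (x ^ k))).choose_spec
  have heq : (ConjClasses.exists_rep (ConjClasses.mk (x ^ k))).choose = x ^ k := by
    obtain ⟨c, hc⟩ := isConj_iff.mp (ConjClasses.mk_eq_mk_iff_isConj.mp hrep)
    rw [hcomm c, mul_inv_cancel_right] at hc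
    exact hc
  rw [nccExp, heq, dlog_pow x hk]

lemma clsF_one : clsF G (1 : G) = 0 := by
  unfold clsF clsC
  rw [dif_pos (mk_eq_one_iff.mpr rfl)]

lemma pow_ne_one_of_lt {x : G} {n k : ℕ} (hx : orderOf x = n) (h1 : 1 ≤ k) (h2 : k < n) :
    x ^ k ≠ 1 := by
  intro h
  have := orderOf_dvd_of_pow_eq_one h
  rw [hx] at this
  exact absurd (Nat.le_of_dvd (by omega) this) (by omega)

lemma clsF_pow_eq_of {x : G} {n k : ℕ} (hx : orderOf x = n) (h1 : 1 ≤ k) (h2 : k < n) :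
    clsF G (x ^ k) = FreeAbelianGroup.of
      (⟨ConjClasses.mk (x ^ k), fun h => pow_ne_one_of_lt hx h1 h2 (mk_eq_one_iff.mp h)⟩ :
        NCC G) := by
  unfold clsF clsC
  rw [dif_neg (fun h => pow_ne_one_of_lt hx h1 h2 (mk_eq_one_iff.mp h))]
  exact rfl

lemma lift_eval {A : Type*} [AddCommGroup A] {x : G} {n : ℕ} (f : ℕ → A)
    (hcomm : ∀ a b : G, a * b = b * a) (hx : orderOf x = n) {k : ℕ}
    (h1 : 1 ≤ k) (h2 : k < n) :
    FreeAbelianGroup.lift (fun c : NCC G => f (nccExp x c.1)) (clsF G (x ^ k)) = f k := by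
  rw [clsF_pow_eq_of hx h1 h2]
  refine (FreeAbelianGroup.lift_apply_of _ _).trans ?_
  show f (nccExp x (ConjClasses.mk (x ^ k))) = f k
  rw [nccExp_mk_pow x hcomm (hx ▸ h2)]

lemma of_eq_clsF (x : G) (hgen : ∀ g : G, g ∈ Subgroup.zpowers x) (c : NCC G) :
    FreeAbelianGroup.of c = clsF G (x ^ nccExp x c.1) ∧
      ConjClasses.mk (x ^ nccExp x c.1) = c.1 ∧
      1 ≤ nccExp x c.1 ∧ nccExp x c.1 < orderOf x := by
  have hmk : ConjClasses.mk (ConjClasses.exists_rep c.1).choose = c.1 :=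
    (ConjClasses.exists_rep c.1).choose_spec
  obtain ⟨hlt, hpow⟩ := dlog_spec (exists_pow_eq x hgen (ConjClasses.exists_rep c.1).choose)
  have hne : (ConjClasses.exists_rep c.1).choose ≠ 1 := by
    intro h
    apply c.2
    rw [← hmk, h]
    exact (ConjClasses.one_eq_mk_one).symm
  have hd1 : 1 ≤ dlog x (ConjClasses.exists_rep c.1).choose := by
    rcases Nat.eq_zero_or_pos (dlog x (ConjClasses.exists_rep c.1).choose) with h | h
    · rw [h, pow_zero] at hpow
      exact absurd hpow.symm hne
    · exact h
  have hmk2 : ConjClasses.mk (x ^ nccExp x c.1) = c.1 := by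
    rw [nccExp, hpow, hmk]
  refine ⟨?_, hmk2, hd1, hlt⟩
  show FreeAbelianGroup.of c = clsF G (x ^ dlog x (ConjClasses.exists_rep c.1).choose)
  rw [clsF_pow_eq_of (n := orderOf x) rfl hd1 hlt]
  exact congrArg _ (Subtype.ext hmk2.symm)

end Aux
section Aux2

/-- auxiliary scalar `s`. -/
def sInt (n : ℕ) : ℤ := if Even n then ((n / 2 : ℕ) : ℤ) else (n : ℤ)

/-- auxiliary scalar `t`. -/
def tInt (n : ℕ) : ℤ := if Even n then 1 else 2

lemma tInt_even {n : ℕ} (h : Even n) : tInt n = 1 := if_pos h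
lemma tInt_odd {n : ℕ} (h : ¬ Even n) : tInt n = 2 := if_neg h
lemma sInt_even {n : ℕ} (h : Even n) : sInt n = ((n / 2 : ℕ) : ℤ) := if_pos h
lemma sInt_odd {n : ℕ} (h : ¬ Even n) : sInt n = (n : ℤ) := if_neg h

/-- The auxiliary functionals. -/
def UU (n : ℕ) (k : ℕ) (j : Fin ((n - 1) / 2)) : ℤ :=
  if (j : ℕ) = 0 then
    (if k = 0 then 0 else if k = 1 then tInt n else if k = n - 1 then -tInt n
      else tInt n * k - sInt n)
  else
    (if k = (j : ℕ) + 1 then 1 else 0) - (if k = n - ((j : ℕ) + 1) then 1 else 0)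

lemma UU_antisym {n : ℕ} (hn : 3 ≤ n) {k : ℕ} (h1 : 1 ≤ k) (h2 : k ≤ n - 1)
    (j : Fin ((n - 1) / 2)) : UU n k j + UU n (n - k) j = 0 := by
  have hj := j.isLt
  unfold UU
  rcases Nat.even_or_odd n with hpar | hpar
  · have hp2 := Nat.even_iff.mp hpar
    rw [tInt_even hpar, sInt_even hpar]
    split_ifs <;> first | contradiction | omega
  · have hp2 := Nat.odd_iff.mp hpar
    rw [tInt_odd (Nat.not_even_iff_odd.mpr hpar), sInt_odd (Nat.not_even_iff_odd.mpr hpar)]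
    split_ifs <;> first | contradiction | omega

lemma V_eq_zero {n : ℕ} (hn : 3 ≤ n) (i j : Fin ((n - 1) / 2)) (hij : (j : ℕ) < (i : ℕ)) :
    UU n 1 j + UU n ((i : ℕ) + 1) j + UU n (n - 1 - ((i : ℕ) + 1)) j = 0 := by
  have hi := i.isLt
  have hj := j.isLt
  unfold UU
  rcases Nat.even_or_odd n with hpar | hpar
  · have hp2 := Nat.even_iff.mp hpar
    rw [tInt_even hpar, sInt_even hpar]
    split_ifs <;> first | contradiction | omega
  · have hp2 := Nat.odd_iff.mp hpar
    rw [tInt_odd (Nat.not_even_iff_odd.mpr hpar), sInt_odd (Nat.not_even_iff_odd.mpr hpar)]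
    split_ifs <;> first | contradiction | omega

lemma V_diag_ne {n : ℕ} (hn : 3 ≤ n) (j : Fin ((n - 1) / 2)) :
    UU n 1 j + UU n ((j : ℕ) + 1) j + UU n (n - 1 - ((j : ℕ) + 1)) j ≠ 0 := by
  have hj := j.isLt
  unfold UU
  rcases Nat.even_or_odd n with hpar | hpar
  · have hp2 := Nat.even_iff.mp hpar
    rw [tInt_even hpar, sInt_even hpar]
    split_ifs <;> first | contradiction | omega
  · have hp2 := Nat.odd_iff.mp hpar
    rw [tInt_odd (Nat.not_even_iff_odd.mpr hpar), sInt_odd (Nat.not_even_iff_odd.mpr hpar)]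
    split_ifs <;> first | contradiction | omega

end Aux2
section Aux3

variable {G : Type*} [Group G] [Fintype G]

/-- The triple `w_i`. -/
noncomputable def wFr (x : G) (n : ℕ) (i : Fin ((n - 1) / 2)) : FreeAbelianGroup (NCC G) :=
  sumF [x, x ^ ((i : ℕ) + 1), x ^ (n - 1 - ((i : ℕ) + 1))]

lemma wFr_eq (x : G) (n : ℕ) (i : Fin ((n - 1) / 2)) :
    wFr x n i = clsF G (x ^ 1) + clsF G (x ^ ((i : ℕ) + 1))
      + clsF G (x ^ (n - 1 - ((i : ℕ) + 1))) := by
  rw [wFr, sumF_cons, sumF_cons, sumF_cons, sumF_nil, pow_one]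
  abel

/-- The subgroup `N ⊔ ⟨w_i⟩`. -/
noncomputable def TTs (x : G) (n : ℕ) : AddSubgroup (FreeAbelianGroup (NCC G)) :=
  NSub G ⊔ AddSubgroup.closure (Set.range (wFr x n))

lemma pair_mem_NSub (g : G) : clsF G g + clsF G g⁻¹ ∈ NSub G :=
  AddSubgroup.subset_closure ⟨g, rfl⟩

lemma pow_pair_mem_NSub {x : G} {n : ℕ} (hx : orderOf x = n) {k : ℕ} (hk : k ≤ n) :
    clsF G (x ^ k) + clsF G (x ^ (n - k)) ∈ NSub G := by
  have hinv : (x ^ k)⁻¹ = x ^ (n - k) := by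
    apply inv_eq_of_mul_eq_one_right
    rw [← pow_add, show k + (n - k) = n from by omega, ← hx, pow_orderOf_eq_one]
  rw [← hinv]
  exact pair_mem_NSub _

lemma wFr_mem_TTs (x : G) (n : ℕ) (i : Fin ((n - 1) / 2)) : wFr x n i ∈ TTs x n :=
  AddSubgroup.mem_sup_right (AddSubgroup.subset_closure ⟨i, rfl⟩)

lemma NSub_le_TTs (x : G) (n : ℕ) : NSub G ≤ TTs x n := le_sup_left

lemma step_mem {x : G} {n : ℕ} (hx : orderOf x = n) (hn : 3 ≤ n) :
    ∀ k, 1 ≤ k → k ≤ (n - 1) / 2 + 1 →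
      clsF G (x ^ k) - k • clsF G (x ^ 1) ∈ TTs x n := by
  intro k
  induction k with
  | zero => omega
  | succ k ih =>
    intro _ hk2
    rcases Nat.eq_zero_or_pos k with rfl | hk1
    · rw [one_nsmul]
      simpa using zero_mem (TTs x n)
    · have hkm : k ≤ (n - 1) / 2 := by omega
      have hIH := ih hk1 (by omega)
      have hw := wFr_mem_TTs x n ⟨k - 1, by omega⟩
      rw [wFr_eq] at hw
      have hpair : clsF G (x ^ (k + 1)) + clsF G (x ^ (n - (k + 1))) ∈ NSub G :=
        pow_pair_mem_NSub hx (by omega)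
      have key : clsF G (x ^ (k + 1)) - (k + 1) • clsF G (x ^ 1) =
          (clsF G (x ^ k) - k • clsF G (x ^ 1))
          - (clsF G (x ^ 1) + clsF G (x ^ ((k - 1 : ℕ) + 1))
              + clsF G (x ^ (n - 1 - ((k - 1 : ℕ) + 1))))
          + (clsF G (x ^ (k + 1)) + clsF G (x ^ (n - (k + 1)))) := by
        rw [show (k - 1 : ℕ) + 1 = k from by omega,
          show n - 1 - k = n - (k + 1) from by omega, succ_nsmul]
        abel
      rw [key]
      exact add_mem (sub_mem hIH hw) (NSub_le_TTs x n hpair)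

lemma nE1_mem {x : G} {n : ℕ} (hx : orderOf x = n) (hn : 3 ≤ n) :
    n • clsF G (x ^ 1) ∈ TTs x n := by
  set m := (n - 1) / 2 with hm
  have hA := step_mem hx hn (m + 1) (by omega) (by omega)
  rcases Nat.even_or_odd n with hpar | hpar
  · -- n even, n = 2 * (m + 1)
    have hpareq := Nat.even_iff.mp hpar
    have hpair : clsF G (x ^ (m + 1)) + clsF G (x ^ (n - (m + 1))) ∈ NSub G :=
      pow_pair_mem_NSub hx (by omega)
    have key : n • clsF G (x ^ 1) =
        (clsF G (x ^ (m + 1)) + clsF G (x ^ (n - (m + 1))))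
        - (clsF G (x ^ (m + 1)) - (m + 1) • clsF G (x ^ 1))
        - (clsF G (x ^ (m + 1)) - (m + 1) • clsF G (x ^ 1)) := by
      rw [show n - (m + 1) = m + 1 from by omega]
      rw [show n • clsF G (x ^ 1) = ((m + 1) + (m + 1)) • clsF G (x ^ 1) from by
        rw [show (m + 1) + (m + 1) = n from by omega]]
      rw [add_nsmul]
      abel
    rw [key]
    exact sub_mem (sub_mem (NSub_le_TTs x n hpair) hA) hA
  · -- n odd, n = 2 * m + 1
    have hpareq := Nat.odd_iff.mp hpar
    have hB := step_mem hx hn m (by omega) (by omega)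
    have hpair : clsF G (x ^ (m + 1)) + clsF G (x ^ (n - (m + 1))) ∈ NSub G :=
      pow_pair_mem_NSub hx (by omega)
    have key : n • clsF G (x ^ 1) =
        (clsF G (x ^ (m + 1)) + clsF G (x ^ (n - (m + 1))))
        - (clsF G (x ^ (m + 1)) - (m + 1) • clsF G (x ^ 1))
        - (clsF G (x ^ m) - m • clsF G (x ^ 1)) := by
      rw [show n - (m + 1) = m from by omega]
      rw [show n • clsF G (x ^ 1) = ((m + 1) + m) • clsF G (x ^ 1) from by
        rw [show (m + 1) + m = n from by omega]]
      rw [add_nsmul]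
      abel
    rw [key]
    exact sub_mem (sub_mem (NSub_le_TTs x n hpair) hA) hB

lemma all_mem {x : G} {n : ℕ} (hx : orderOf x = n) (hn : 3 ≤ n) :
    ∀ k, k ≤ n - 1 → clsF G (x ^ k) - k • clsF G (x ^ 1) ∈ TTs x n := by
  intro k hk
  rcases Nat.eq_zero_or_pos k with rfl | hk1
  · simpa [pow_zero, clsF_one] using zero_mem (TTs x n)
  rcases le_or_gt k ((n - 1) / 2 + 1) with hle | hgt
  · exact step_mem hx hn k hk1 hle
  · have hpair : clsF G (x ^ k) + clsF G (x ^ (n - k)) ∈ NSub G :=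
      pow_pair_mem_NSub hx (by omega)
    have hB := step_mem hx hn (n - k) (by omega) (by omega)
    have hC := nE1_mem hx hn
    have key : clsF G (x ^ k) - k • clsF G (x ^ 1) =
        (clsF G (x ^ k) + clsF G (x ^ (n - k)))
        - (clsF G (x ^ (n - k)) - (n - k) • clsF G (x ^ 1))
        - n • clsF G (x ^ 1) := by
      rw [show (n : ℕ) • clsF G (x ^ 1) = ((n - k) + k) • clsF G (x ^ 1) from by
        rw [show (n - k) + k = n from by omega]]
      rw [add_nsmul]
      abel
    rw [key]
    exact sub_mem (sub_mem (NSub_le_TTs x n hpair) hB) hC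

end Aux3
section Aux4

variable {G : Type*} [Group G] [Fintype G]

/-- The exponent-sum functional `ρ`. -/
noncomputable def rhoF (x : G) : FreeAbelianGroup (NCC G) →+ ℤ :=
  FreeAbelianGroup.lift fun c : NCC G => ((nccExp x c.1 : ℕ) : ℤ)

lemma sub_rho_mem {x : G} {n : ℕ} (hcomm : ∀ a b : G, a * b = b * a)
    (hgen : ∀ g : G, g ∈ Subgroup.zpowers x) (hx : orderOf x = n) (hn : 3 ≤ n)
    (v : FreeAbelianGroup (NCC G)) : v - (rhoF x v) • clsF G (x ^ 1) ∈ TTs x n := by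
  refine FreeAbelianGroup.induction_on v ?_ ?_ ?_ ?_
  · simpa using zero_mem (TTs x n)
  · intro c
    obtain ⟨hof, hmk, h1, h2⟩ := of_eq_clsF x hgen c
    rw [hx] at h2
    have hr : rhoF x (FreeAbelianGroup.of c) = ((nccExp x c.1 : ℕ) : ℤ) :=
      FreeAbelianGroup.lift_apply_of _ _
    rw [hof] at hr ⊢
    rw [hr, natCast_zsmul]
    exact all_mem hx hn _ (by omega)
  · intro c h
    have key : -FreeAbelianGroup.of c - rhoF x (-FreeAbelianGroup.of c) • clsF G (x ^ 1) =
        -(FreeAbelianGroup.of c - rhoF x (FreeAbelianGroup.of c) • clsF G (x ^ 1)) := by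
      rw [map_neg, neg_zsmul]
      abel
    rw [key]
    exact neg_mem h
  · intro a b ha hb
    have key : a + b - rhoF x (a + b) • clsF G (x ^ 1) =
        (a - rhoF x a • clsF G (x ^ 1)) + (b - rhoF x b • clsF G (x ^ 1)) := by
      rw [map_add, add_zsmul]
      abel
    rw [key]
    exact add_mem ha hb

lemma phi_eq_rho (x : G) (hcomm : ∀ a b : G, a * b = b * a)
    (hgen : ∀ g : G, g ∈ Subgroup.zpowers x) (v : FreeAbelianGroup (NCC G)) :
    phi G v = (rhoF x v) • Additive.ofMul (Abelianization.of x) := by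
  refine FreeAbelianGroup.induction_on v ?_ ?_ ?_ ?_
  · simp
  · intro c
    obtain ⟨hof, hmk, h1, h2⟩ := of_eq_clsF x hgen c
    have hr : rhoF x (FreeAbelianGroup.of c) = ((nccExp x c.1 : ℕ) : ℤ) :=
      FreeAbelianGroup.lift_apply_of _ _
    rw [phi_of, hr, natCast_zsmul]
    conv_lhs => rw [← hmk]
    rw [classAb_mk, map_pow, ← ofMul_pow]
  · intro c h
    rw [map_neg, map_neg, neg_zsmul, h]
  · intro a b ha hb
    rw [map_add, map_add, add_zsmul, ha, hb]

lemma commutator_eq_bot_of_comm (hcomm : ∀ a b : G, a * b = b * a) :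
    commutator G = ⊥ := by
  rw [commutator_eq_closure, Subgroup.closure_eq_bot_iff]
  rintro g ⟨a, b, rfl⟩
  exact commutatorElement_eq_one_iff_commute.mpr (hcomm a b)

lemma rho_dvd {x : G} {n : ℕ} (hcomm : ∀ a b : G, a * b = b * a)
    (hgen : ∀ g : G, g ∈ Subgroup.zpowers x) (hx : orderOf x = n)
    {v : FreeAbelianGroup (NCC G)} (hv : v ∈ (phi G).ker) : (n : ℤ) ∣ rhoF x v := by
  have h0 : phi G v = 0 := AddMonoidHom.mem_ker.mp hv
  rw [phi_eq_rho x hcomm hgen v] at h0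
  have h1 : Additive.ofMul (Abelianization.of (x ^ (rhoF x v))) = 0 := by
    rw [map_zpow, ofMul_zpow]
    exact h0
  have h2 : Abelianization.of (x ^ (rhoF x v)) = 1 := h1
  have h3 : x ^ (rhoF x v) = 1 := by
    have := abOf_eq_one_iff.mp h2
    rw [commutator_eq_bot_of_comm hcomm] at this
    exact Subgroup.mem_bot.mp this
  rw [← hx]
  exact orderOf_dvd_iff_zpow_eq_one.mpr h3

end Aux4

section Aux5

variable {G : Type*} [Group G] [Fintype G]

lemma NSub_le_ker_phi : NSub G ≤ (phi G).ker := by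
  rw [NSub, AddSubgroup.closure_le]
  rintro a ⟨g, rfl⟩
  simp only [SetLike.mem_coe, AddMonoidHom.mem_ker, map_add, phi_clsF]
  rw [← ofMul_mul, ← map_mul, mul_inv_cancel, map_one, ofMul_one]

end Aux5

section Aux6

variable {G : Type*} [Group G] [Fintype G]

/-- The injectivity-detecting functional `ψ`. -/
noncomputable def psiF (x : G) (n : ℕ) :
    FreeAbelianGroup (NCC G) →+ (Fin ((n - 1) / 2) → ℤ) :=
  FreeAbelianGroup.lift fun c : NCC G => UU n (nccExp x c.1)

lemma psiF_eval {x : G} {n : ℕ} (hcomm : ∀ a b : G, a * b = b * a)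
    (hx : orderOf x = n) {k : ℕ} (h1 : 1 ≤ k) (h2 : k < n) :
    psiF x n (clsF G (x ^ k)) = UU n k :=
  lift_eval (fun k => UU n k) hcomm hx h1 h2

lemma psiF_w {x : G} {n : ℕ} (hcomm : ∀ a b : G, a * b = b * a)
    (hx : orderOf x = n) (hn : 3 ≤ n) (i : Fin ((n - 1) / 2)) :
    psiF x n (wFr x n i) =
      fun j => UU n 1 j + UU n ((i : ℕ) + 1) j + UU n (n - 1 - ((i : ℕ) + 1)) j := by
  have hi := i.isLt
  rw [wFr_eq, map_add, map_add, psiF_eval hcomm hx (le_refl 1) (by omega),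
    psiF_eval hcomm hx (by omega) (by omega), psiF_eval hcomm hx (by omega) (by omega)]
  rfl

lemma psiF_NSub {x : G} {n : ℕ} (hcomm : ∀ a b : G, a * b = b * a)
    (hgen : ∀ g : G, g ∈ Subgroup.zpowers x) (hx : orderOf x = n) (hn : 3 ≤ n) :
    NSub G ≤ (psiF x n).ker := by
  rw [NSub, AddSubgroup.closure_le]
  rintro w ⟨g, rfl⟩
  obtain ⟨k, hk, rfl⟩ := exists_pow_eq x hgen g
  rw [hx] at hk
  simp only [SetLike.mem_coe, AddMonoidHom.mem_ker, map_add]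
  rcases Nat.eq_zero_or_pos k with rfl | hk1
  · rw [pow_zero, clsF_one, inv_one, clsF_one, map_zero, add_zero]
  · have hinv : (x ^ k)⁻¹ = x ^ (n - k) := by
      apply inv_eq_of_mul_eq_one_left
      rw [← pow_add, show (n - k) + k = n from by omega, ← hx, pow_orderOf_eq_one]
    rw [hinv, psiF_eval hcomm hx hk1 hk, psiF_eval hcomm hx (by omega) (by omega)]
    funext j
    exact UU_antisym hn hk1 (by omega) j

end Aux6
section Main

variable {G : Type*} [Group G] [Fintype G]

lemma main_basis (x : G) (n : ℕ) (hgen : ∀ g : G, g ∈ Subgroup.zpowers x)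
    (hcard : Fintype.card G = n) (hn : 3 ≤ n) :
    ∃ b : Module.Basis (Fin ((n - 1) / 2)) ℤ (SOD G),
      ∀ (i : Fin ((n - 1) / 2)) (h : ([x, x ^ ((i : ℕ) + 1), x ^ (n - 1 - ((i : ℕ) + 1))] :
          List G).prod ∈ commutator G),
        b i = data _ h := by
  classical
  have hcomm : ∀ a b : G, a * b = b * a := by
    intro a b
    obtain ⟨s, rfl⟩ := Subgroup.mem_zpowers_iff.mp (hgen a)
    obtain ⟨t, rfl⟩ := Subgroup.mem_zpowers_iff.mp (hgen b)
    rw [← zpow_add, ← zpow_add, add_comm]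
  have htop : Subgroup.zpowers x = ⊤ := by
    rw [Subgroup.eq_top_iff']
    exact hgen
  have hx : orderOf x = n := by
    rw [← Nat.card_zpowers, htop, Subgroup.card_top, Nat.card_eq_fintype_card, hcard]
  have hprod : ∀ i : Fin ((n - 1) / 2),
      ([x, x ^ ((i : ℕ) + 1), x ^ (n - 1 - ((i : ℕ) + 1))] : List G).prod ∈ commutator G :=
    fun i => triple_pow_mem (n := n) (by rw [← hx]; exact pow_orderOf_eq_one x)
      (by have := i.isLt; omega)
  set W : Fin ((n - 1) / 2) → SOD G := fun i => data _ (hprod i) with hW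
  have hWq : ∀ i, W i =
      QuotientAddGroup.mk ⟨wFr x n i, sumF_mem_ker (hprod i)⟩ := fun i => rfl
  set θ : (Fin ((n - 1) / 2) → ℤ) →+ SOD G := AddMonoidHom.mk'
    (fun c => ∑ j, c j • W j)
    (by intro a b; simp [add_smul, Finset.sum_add_distrib]) with hθdef
  have hθ : ∀ c, θ c = ∑ j, c j • W j := fun c => rfl
  have hθsingle : ∀ i, θ (Pi.single i 1) = W i := by
    intro i
    rw [hθ]
    simp [Pi.single_apply, ite_smul]
  have hclker : AddSubgroup.closure (Set.range (wFr x n)) ≤ (phi G).ker := by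
    rw [AddSubgroup.closure_le]
    rintro a ⟨i, rfl⟩
    exact sumF_mem_ker (hprod i)
  -- surjectivity
  have hsurj : Function.Surjective θ := by
    intro q
    refine QuotientAddGroup.induction_on q ?_
    rintro ⟨v, hv⟩
    obtain ⟨e, he⟩ := rho_dvd hcomm hgen hx hv
    have hvT : v ∈ TTs x n := by
      have h1 := sub_rho_mem hcomm hgen hx hn v
      have h2 : (rhoF x v) • clsF G (x ^ 1) ∈ TTs x n := by
        rw [he, mul_comm, mul_smul]
        refine AddSubgroup.zsmul_mem _ ?_ e
        rw [natCast_zsmul]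
        exact nE1_mem hx hn
      simpa using add_mem h1 h2
    rw [TTs, AddSubgroup.mem_sup] at hvT
    obtain ⟨a, ha, b, hb, hab⟩ := hvT
    have haker : a ∈ (phi G).ker := NSub_le_ker_phi ha
    have hbker : b ∈ (phi G).ker := hclker hb
    have hsplit : (QuotientAddGroup.mk ⟨v, hv⟩ : SOD G) =
        QuotientAddGroup.mk ⟨a, haker⟩ + QuotientAddGroup.mk ⟨b, hbker⟩ := by
      rw [← QuotientAddGroup.mk_add]
      congr 1
      exact Subtype.ext hab.symm
    have hazero : (QuotientAddGroup.mk ⟨a, haker⟩ : SOD G) = 0 :=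
      (QuotientAddGroup.eq_zero_iff _).mpr (by rwa [AddSubgroup.mem_addSubgroupOf])
    have hbrange : ∀ (hbk : b ∈ (phi G).ker),
        (QuotientAddGroup.mk ⟨b, hbk⟩ : SOD G) ∈ θ.range := by
      refine AddSubgroup.closure_induction
        (p := fun g _ => ∀ (hk : g ∈ (phi G).ker),
          (QuotientAddGroup.mk ⟨g, hk⟩ : SOD G) ∈ θ.range) ?_ ?_ ?_ ?_ hb
      · rintro w ⟨i, rfl⟩ hk
        exact ⟨Pi.single i 1, (hθsingle i).trans (hWq i)⟩
      · intro hk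
        refine ⟨0, ?_⟩
        rw [map_zero]
        exact ((QuotientAddGroup.eq_zero_iff _).mpr
          (by rw [AddSubgroup.mem_addSubgroupOf]; exact zero_mem _)).symm
      · intro g1 g2 hg1 hg2 p1 p2 hk
        have heq : (QuotientAddGroup.mk ⟨g1 + g2, hk⟩ : SOD G) =
            QuotientAddGroup.mk ⟨g1, hclker hg1⟩ + QuotientAddGroup.mk ⟨g2, hclker hg2⟩ := by
          rw [← QuotientAddGroup.mk_add]
          rfl
        rw [heq]
        exact add_mem (p1 (hclker hg1)) (p2 (hclker hg2))
      · intro g1 hg1 p1 hk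
        have heq : (QuotientAddGroup.mk ⟨-g1, hk⟩ : SOD G) =
            -QuotientAddGroup.mk ⟨g1, hclker hg1⟩ := by
          rw [← QuotientAddGroup.mk_neg]
          rfl
        rw [heq]
        exact neg_mem (p1 (hclker hg1))
    obtain ⟨c, hc⟩ := hbrange hbker
    exact ⟨c, by rw [hc, hsplit, hazero, zero_add]⟩
  -- injectivity
  have hΨexists : ∀ w ∈ (NSub G).addSubgroupOf (phi G).ker,
      (psiF x n).comp ((phi G).ker.subtype) w = 0 := by
    intro w hw
    exact AddMonoidHom.mem_ker.mp (psiF_NSub hcomm hgen hx hn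
      (AddSubgroup.mem_addSubgroupOf.mp hw))
  set Ψ : SOD G →+ (Fin ((n - 1) / 2) → ℤ) :=
    QuotientAddGroup.lift _ ((psiF x n).comp ((phi G).ker.subtype)) hΨexists with hΨdef
  have hΨW : ∀ j, Ψ (W j) = psiF x n (wFr x n j) := fun j => rfl
  have hinj : Function.Injective θ := by
    refine (injective_iff_map_eq_zero θ).mpr ?_
    intro c hc
    have h0 : ∑ j, c j • psiF x n (wFr x n j) = 0 := by
      calc ∑ j, c j • psiF x n (wFr x n j) = ∑ j, c j • Ψ (W j) := by
            simp only [hΨW]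
        _ = Ψ (∑ j, c j • W j) := by
            rw [map_sum]
            simp only [map_zsmul]
        _ = Ψ (θ c) := by rw [hθ]
        _ = 0 := by rw [hc, map_zero]
    have hrow : ∀ j : Fin ((n - 1) / 2),
        ∑ i, c i * (UU n 1 j + UU n ((i : ℕ) + 1) j + UU n (n - 1 - ((i : ℕ) + 1)) j) = 0 := by
      intro j
      have h1 := congrFun h0 j
      rw [Finset.sum_apply] at h1
      simp only [psiF_w hcomm hx hn, Pi.smul_apply, smul_eq_mul] at h1
      simpa using h1
    have hzero : ∀ jv : ℕ, ∀ hjv : jv < (n - 1) / 2, c ⟨jv, hjv⟩ = 0 := by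
      intro jv
      induction jv using Nat.strong_induction_on with
      | _ jv IH =>
        intro hjv
        have hr := hrow ⟨jv, hjv⟩
        have hside1 : ∀ b : Fin ((n - 1) / 2), b ∈ Finset.univ → b ≠ ⟨jv, hjv⟩ →
            c b * (UU n 1 ⟨jv, hjv⟩ + UU n ((b : ℕ) + 1) ⟨jv, hjv⟩
              + UU n (n - 1 - ((b : ℕ) + 1)) ⟨jv, hjv⟩) = 0 := by
          intro b _ hbj
          rcases Nat.lt_or_ge (b : ℕ) jv with hlt | hge
          · have hb0 : c b = 0 := by
              have := IH b.1 hlt b.2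
              simpa using this
            rw [hb0, zero_mul]
          · have hgt : jv < (b : ℕ) := by
              rcases Nat.eq_or_lt_of_le hge with he | hl
              · exact absurd (Fin.ext he.symm) hbj
              · exact hl
            rw [V_eq_zero hn b ⟨jv, hjv⟩ hgt, mul_zero]
        have hside2 : (⟨jv, hjv⟩ : Fin ((n - 1) / 2)) ∉ Finset.univ →
            c ⟨jv, hjv⟩ * (UU n 1 ⟨jv, hjv⟩ + UU n (jv + 1) ⟨jv, hjv⟩
              + UU n (n - 1 - (jv + 1)) ⟨jv, hjv⟩) = 0 :=
          fun h => absurd (Finset.mem_univ _) h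
        rw [Finset.sum_eq_single _ hside1 hside2] at hr
        rcases mul_eq_zero.mp hr with h' | h'
        · exact h'
        · exact absurd h' (V_diag_ne hn ⟨jv, hjv⟩)
    funext j
    simpa using hzero j.1 j.2
  -- assemble the basis
  have hbij : Function.Bijective θ.toIntLinearMap := ⟨hinj, hsurj⟩
  refine ⟨(Pi.basisFun ℤ (Fin ((n - 1) / 2))).map
    (LinearEquiv.ofBijective θ.toIntLinearMap hbij), ?_⟩
  intro i h
  rw [Module.Basis.map_apply, Pi.basisFun_apply]
  show θ (Pi.single i 1) = data _ h
  rw [hθsingle i]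

end Main

/-- for `G` cyclic of prime power order `p^r` with generator `x`:
if `p` is odd the triples `[x, x^i, x^(p^r-1-i)]`, `i = 1, …, (p^r-1)/2`, form a
`ℤ`-basis of `𝔹_G`; if `p = 2` (and `p^r > 2`) the triples `[x, x^i, x^(2^r-1-i)]`,
`i = 1, …, 2^(r-1) - 1`, form a `ℤ`-basis of `𝔹_G`. -/
theorem stmt3 (p r : ℕ) (hp : p.Prime) (hr : 0 < r)
    (G : Type*) [Group G] [Fintype G] (x : G)
    (hgen : ∀ g : G, g ∈ Subgroup.zpowers x) (hcard : Fintype.card G = p ^ r) :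
    (Odd p →
      ∃ b : Module.Basis (Fin ((p ^ r - 1) / 2)) ℤ (SOD G), ∀ i : Fin ((p ^ r - 1) / 2),
        b i = data [x, x ^ ((i : ℕ) + 1), x ^ (p ^ r - 1 - ((i : ℕ) + 1))]
          (triple_pow_mem (n := p ^ r) (by rw [← hcard]; exact pow_card_eq_one)
            (by have := i.isLt; omega))) ∧
    (∀ (hp2 : p = 2), 2 < 2 ^ r →
      ∃ b : Module.Basis (Fin (2 ^ (r - 1) - 1)) ℤ (SOD G), ∀ i : Fin (2 ^ (r - 1) - 1),
        b i = data [x, x ^ ((i : ℕ) + 1), x ^ (2 ^ r - 1 - ((i : ℕ) + 1))]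
          (triple_pow_mem (n := 2 ^ r) (by rw [← hp2, ← hcard]; exact pow_card_eq_one)
            (by
              have h1 := i.isLt
              have h2 : (2 : ℕ) ^ r = 2 * 2 ^ (r - 1) := by
                conv_lhs => rw [show r = (r - 1) + 1 by omega]
                rw [pow_succ']
              omega))) := by
  constructor
  · intro hodd
    have hp3 : 3 ≤ p := by
      have h2 := hp.two_le
      rcases Nat.lt_or_ge p 3 with h | h
      · interval_cases p
        · exact absurd hodd (by decide)
      · exact h
    have hn : 3 ≤ p ^ r := le_trans hp3 (Nat.le_self_pow (by omega) p)
    obtain ⟨b, hb⟩ := main_basis x (p ^ r) hgen hcard hn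
    exact ⟨b, fun i => hb i _⟩
  · intro hp2 h2r
    subst hp2
    have hn : 3 ≤ 2 ^ r := by omega
    obtain ⟨b, hb⟩ := main_basis x (2 ^ r) hgen hcard hn
    have hpow : (2 : ℕ) ^ r = 2 * 2 ^ (r - 1) := by
      conv_lhs => rw [show r = (r - 1) + 1 by omega]
      rw [pow_succ']
    have heq : (2 ^ r - 1) / 2 = 2 ^ (r - 1) - 1 := by omega
    refine ⟨b.reindex (finCongr heq), fun i => ?_⟩
    rw [Module.Basis.reindex_apply]
    have hval : (((finCongr heq).symm i : Fin ((2 ^ r - 1) / 2)) : ℕ) = (i : ℕ) := rfl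
    rw [hb ((finCongr heq).symm i) (by rw [hval]; exact (triple_pow_mem
      (n := 2 ^ r) (by rw [← hcard]; exact pow_card_eq_one) (by have := i.isLt; omega)))]
    simp only [hval]

end SingOrbit
end

section
/- Let G = C_2 × C_2 be the Klein four-group with generators x and y. Then 𝔹_G is cyclic of order 2, generated by the element [x, y, xy]. -/
namespace SingOrbit

variable (G : Type*) [Group G]

variable {G}

section Klein

abbrev K : Type := Multiplicative (ZMod 2 × ZMod 2)

instance : DecidableRel (IsConj : K → K → Prop) :=
  fun _ _ => decidable_of_iff _ isConj_iff_eq.symm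

instance : DecidableEq (NCC K) :=
  inferInstanceAs (DecidableEq {c : ConjClasses K // c ≠ 1})

def xK : K := Multiplicative.ofAdd ((1, 0) : ZMod 2 × ZMod 2)
def yK : K := Multiplicative.ofAdd ((0, 1) : ZMod 2 × ZMod 2)
def zK : K := Multiplicative.ofAdd ((1, 1) : ZMod 2 × ZMod 2)

lemma inv_self (u : K) : u⁻¹ = u := by revert u; decide

lemma mem4 (u : K) : u = 1 ∨ u = xK ∨ u = yK ∨ u = zK := by revert u; decide

def cx : NCC K := ⟨ConjClasses.mk xK, fun h => (by decide : xK ≠ 1) (mk_eq_one_iff.mp h)⟩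
def cy : NCC K := ⟨ConjClasses.mk yK, fun h => (by decide : yK ≠ 1) (mk_eq_one_iff.mp h)⟩
def cz : NCC K := ⟨ConjClasses.mk zK, fun h => (by decide : zK ≠ 1) (mk_eq_one_iff.mp h)⟩

lemma ncc_cases (c : NCC K) : c = cx ∨ c = cy ∨ c = cz := by
  obtain ⟨u, hu⟩ := ConjClasses.mk_surjective c.1
  rcases mem4 u with h | h | h | h
  · exact absurd (by rw [← hu, h]; exact mk_eq_one_iff.mpr rfl) c.2
  · exact Or.inl (Subtype.ext (by rw [← hu, h]; rfl))
  · exact Or.inr (Or.inl (Subtype.ext (by rw [← hu, h]; rfl)))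
  · exact Or.inr (Or.inr (Subtype.ext (by rw [← hu, h]; rfl)))

/-- coordinate homomorphism -/
noncomputable def pj (c : NCC K) : FreeAbelianGroup (NCC K) →+ ℤ :=
  FreeAbelianGroup.lift fun d => if d = c then (1 : ℤ) else 0

lemma pj_of (c d : NCC K) :
    pj c (FreeAbelianGroup.of d) = if d = c then (1 : ℤ) else 0 :=
  FreeAbelianGroup.lift_apply_of _ _

lemma decomp (w : FreeAbelianGroup (NCC K)) :
    w = pj cx w • FreeAbelianGroup.of cx + pj cy w • FreeAbelianGroup.of cy
      + pj cz w • FreeAbelianGroup.of cz := by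
  have key : AddMonoidHom.id (FreeAbelianGroup (NCC K)) =
      ((zmultiplesHom _ (FreeAbelianGroup.of cx)).comp (pj cx)
        + (zmultiplesHom _ (FreeAbelianGroup.of cy)).comp (pj cy))
        + (zmultiplesHom _ (FreeAbelianGroup.of cz)).comp (pj cz) := by
    ext c
    have h1 : cx ≠ cy := by decide
    have h2 : cx ≠ cz := by decide
    have h3 : cy ≠ cx := by decide
    have h4 : cy ≠ cz := by decide
    have h5 : cz ≠ cx := by decide
    have h6 : cz ≠ cy := by decide
    rcases ncc_cases c with h | h | h <;> subst h <;>
      simp [pj_of, h1, h2, h3, h4, h5, h6]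
  have := DFunLike.congr_fun key w
  simpa using this

lemma clsF_of_ne {u : K} (hu : u ≠ 1) :
    clsF K u = FreeAbelianGroup.of ⟨ConjClasses.mk u, fun h => hu (mk_eq_one_iff.mp h)⟩ := by
  rw [clsF, clsC, dif_neg (fun h => hu (mk_eq_one_iff.mp h))]

lemma two_smul_mem (c : NCC K) : (2 : ℤ) • FreeAbelianGroup.of c ∈ NSub K := by
  obtain ⟨u, hu⟩ := ConjClasses.mk_surjective c.1
  have hu1 : u ≠ 1 := fun h => c.2 (by rw [← hu, h]; exact mk_eq_one_iff.mpr rfl)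
  have hc : (⟨ConjClasses.mk u, fun h => hu1 (mk_eq_one_iff.mp h)⟩ : NCC K) = c :=
    Subtype.ext hu
  have heq : (2 : ℤ) • FreeAbelianGroup.of c = clsF K u + clsF K u⁻¹ := by
    rw [inv_self, clsF_of_ne hu1, hc, two_smul]
  exact heq ▸ AddSubgroup.subset_closure ⟨u, heq ▸ rfl⟩

lemma even_smul_mem (k : ℤ) (c : NCC K) :
    (2 * k) • FreeAbelianGroup.of c ∈ NSub K := by
  rw [mul_comm, mul_smul]
  exact AddSubgroup.zsmul_mem _ (two_smul_mem c) k

/-- projection from the abelianization back to the group (additively) -/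
noncomputable def chi : Additive (Abelianization K) →+ ZMod 2 × ZMod 2 where
  toFun a := Multiplicative.toAdd (Abelianization.lift (MonoidHom.id K) a.toMul)
  map_zero' := by simp
  map_add' a b := by
    show Multiplicative.toAdd ((Abelianization.lift (MonoidHom.id K)) (a.toMul * b.toMul)) = _
    rw [map_mul]; rfl

lemma chi_of (u : K) :
    chi (Additive.ofMul (Abelianization.of u)) = Multiplicative.toAdd u := by
  show Multiplicative.toAdd ((Abelianization.lift (MonoidHom.id K)) (Abelianization.of u)) = _
  rw [Abelianization.lift_apply_of]; rfl

lemma ker_coords {w : FreeAbelianGroup (NCC K)} (hw : w ∈ (phi K).ker) :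
    (2 : ℤ) ∣ (pj cy w - pj cx w) ∧ (2 : ℤ) ∣ (pj cz w - pj cx w) := by
  have h0 : phi K w = 0 := hw
  have hd := congrArg (phi K) (decomp w)
  rw [h0, map_add, map_add, map_zsmul, map_zsmul, map_zsmul, phi_of, phi_of, phi_of] at hd
  have h2 := congrArg chi hd.symm
  rw [map_add, map_add, map_zsmul, map_zsmul, map_zsmul, map_zero] at h2
  have hcx : chi (classAb K cx.1) = ((1, 0) : ZMod 2 × ZMod 2) := chi_of xK
  have hcy : chi (classAb K cy.1) = ((0, 1) : ZMod 2 × ZMod 2) := chi_of yK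
  have hcz : chi (classAb K cz.1) = ((1, 1) : ZMod 2 × ZMod 2) := chi_of zK
  rw [hcx, hcy, hcz] at h2
  have hfst := congrArg Prod.fst h2
  have hsnd := congrArg Prod.snd h2
  simp only [Prod.fst_add, Prod.snd_add, Prod.smul_fst, Prod.smul_snd, Prod.fst_zero,
    Prod.snd_zero, smul_zero, add_zero, zero_add] at hfst hsnd
  rw [zsmul_eq_mul, zsmul_eq_mul, mul_one, mul_one] at hfst
  rw [zsmul_eq_mul, zsmul_eq_mul, mul_one, mul_one] at hsnd
  have h20 : (2 : ZMod 2) = 0 := rfl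
  constructor
  · have h1 : ((pj cy w - pj cx w : ℤ) : ZMod 2) = 0 := by
      push_cast
      linear_combination hsnd - hfst
    exact_mod_cast (ZMod.intCast_zmod_eq_zero_iff_dvd _ 2).mp h1
  · have h1 : ((pj cz w - pj cx w : ℤ) : ZMod 2) = 0 := by
      push_cast
      linear_combination hfst - ((pj cx w : ℤ) : ZMod 2) * h20
    exact_mod_cast (ZMod.intCast_zmod_eq_zero_iff_dvd _ 2).mp h1

lemma cxy' : cx ≠ cy := by decide
lemma cxz' : cx ≠ cz := by decide
lemma cyx' : cy ≠ cx := by decide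
lemma cyz' : cy ≠ cz := by decide
lemma czx' : cz ≠ cx := by decide
lemma czy' : cz ≠ cy := by decide

lemma clsF_xK : clsF K xK = FreeAbelianGroup.of cx := clsF_of_ne (by decide)
lemma clsF_yK : clsF K yK = FreeAbelianGroup.of cy := clsF_of_ne (by decide)
lemma clsF_zK : clsF K zK = FreeAbelianGroup.of cz := clsF_of_ne (by decide)

/-- the list of generators -/
def L : List K := [xK, yK, xK * yK]

lemma sumF_gen : sumF L = FreeAbelianGroup.of cx + FreeAbelianGroup.of cy
    + FreeAbelianGroup.of cz := by
  have hz : xK * yK = zK := by decide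
  rw [L, sumF_cons, sumF_cons, sumF_cons, sumF_nil, hz, clsF_xK, clsF_yK, clsF_zK,
    add_zero, add_assoc]

/-- the coefficient-sum homomorphism mod 2 -/
noncomputable def fsum : FreeAbelianGroup (NCC K) →+ ZMod 2 :=
  FreeAbelianGroup.lift fun _ => (1 : ZMod 2)

lemma fsum_of (d : NCC K) : fsum (FreeAbelianGroup.of d) = 1 :=
  FreeAbelianGroup.lift_apply_of _ _

lemma NSub_le_fker : NSub K ≤ fsum.ker := by
  rw [NSub]
  rw [AddSubgroup.closure_le]
  rintro a ⟨u, rfl⟩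
  rw [SetLike.mem_coe, AddMonoidHom.mem_ker, map_add, inv_self]
  by_cases hu : u = 1
  · subst hu
    rw [clsF, clsC, dif_pos (mk_eq_one_iff.mpr rfl)]
    simp
  · erw [clsF_of_ne hu, fsum_of]
    decide

noncomputable def psi : SOD K →+ ZMod 2 :=
  QuotientAddGroup.lift ((NSub K).addSubgroupOf (phi K).ker)
    (fsum.comp (AddSubgroup.subtype _))
    (fun a ha => NSub_le_fker (AddSubgroup.mem_addSubgroupOf.mp ha))

lemma psi_mk (w : (phi K).ker) : psi (QuotientAddGroup.mk w) = fsum w.1 := rfl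

lemma ord_two (h : L.prod ∈ commutator K) : addOrderOf (data L h) = 2 := by
  haveI : Fact (Nat.Prime 2) := ⟨Nat.prime_two⟩
  refine addOrderOf_eq_prime ?_ ?_
  · show (2 : ℕ) • data L h = 0
    erw [data, ← QuotientAddGroup.mk_nsmul, QuotientAddGroup.eq_zero_iff,
      AddSubgroup.mem_addSubgroupOf]
    show (2 : ℕ) • sumF L ∈ NSub K
    have h2 : (2 : ℕ) • sumF L = (2 : ℤ) • FreeAbelianGroup.of cx
        + (2 : ℤ) • FreeAbelianGroup.of cy + (2 : ℤ) • FreeAbelianGroup.of cz := by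
      rw [sumF_gen, smul_add, smul_add,
        show ((2:ℤ)) = ((2:ℕ) : ℤ) from rfl, natCast_zsmul, natCast_zsmul, natCast_zsmul]
    rw [h2]
    have e1 : (2 : ℤ) = 2 * 1 := by ring
    refine AddSubgroup.add_mem _ (AddSubgroup.add_mem _ ?_ ?_) ?_ <;>
      (rw [e1]; exact even_smul_mem 1 _)
  · intro h0
    have hps := congrArg psi h0
    rw [map_zero, data, psi_mk] at hps
    have : fsum (sumF L) = 1 := by
      rw [sumF_gen, map_add, map_add, fsum_of, fsum_of, fsum_of]
      rfl
    rw [this] at hps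
    exact one_ne_zero hps

lemma closure_top (h : L.prod ∈ commutator K) :
    AddSubgroup.closure {data L h} = ⊤ := by
  rw [eq_top_iff]
  rintro t -
  induction t using QuotientAddGroup.induction_on with
  | H w =>
  obtain ⟨hk1, hk2⟩ := ker_coords w.2
  obtain ⟨k, hk⟩ := hk1
  obtain ⟨m, hm⟩ := hk2
  set a := pj cx w.1 with ha
  have key : (QuotientAddGroup.mk w :
      (phi K).ker ⧸ ((NSub K).addSubgroupOf (phi K).ker)) = a • data L h := by
    erw [data, ← QuotientAddGroup.mk_zsmul, QuotientAddGroup.eq,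
      AddSubgroup.mem_addSubgroupOf]
    show -w.1 + a • sumF L ∈ NSub K
    have hb : pj cy w.1 = a + 2 * k := by omega
    have hc : pj cz w.1 = a + 2 * m := by omega
    have expr : -w.1 + a • sumF L = (2 * (-k)) • FreeAbelianGroup.of cy
        + (2 * (-m)) • FreeAbelianGroup.of cz := by
      rw [sumF_gen]
      nth_rw 1 [decomp w.1]
      rw [hb, hc, ← ha]
      module
    rw [expr]
    exact AddSubgroup.add_mem _ (even_smul_mem (-k) cy) (even_smul_mem (-m) cz)
  rw [key]
  exact AddSubgroup.zsmul_mem _ (AddSubgroup.subset_closure (Set.mem_singleton _)) a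

end Klein

/-- for the Klein four-group `G = C₂ × C₂` with generators `x`, `y`,
the group `𝔹_G` is cyclic of order 2, generated by `[x, y, xy]`. -/
theorem stmt7 (x y : Multiplicative (ZMod 2 × ZMod 2))
    (hx : x = Multiplicative.ofAdd ((1, 0) : ZMod 2 × ZMod 2))
    (hy : y = Multiplicative.ofAdd ((0, 1) : ZMod 2 × ZMod 2)) :
    AddSubgroup.closure
        {data [x, y, x * y] (by
          subst hx hy
          have h1 : ([Multiplicative.ofAdd ((1, 0) : ZMod 2 × ZMod 2),
              Multiplicative.ofAdd ((0, 1) : ZMod 2 × ZMod 2),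
              Multiplicative.ofAdd ((1, 0) : ZMod 2 × ZMod 2) *
                Multiplicative.ofAdd ((0, 1) : ZMod 2 × ZMod 2)] :
              List (Multiplicative (ZMod 2 × ZMod 2))).prod = 1 := by decide
          rw [h1]; exact Subgroup.one_mem _)} = ⊤ ∧
    addOrderOf (data [x, y, x * y] (by
          subst hx hy
          have h1 : ([Multiplicative.ofAdd ((1, 0) : ZMod 2 × ZMod 2),
              Multiplicative.ofAdd ((0, 1) : ZMod 2 × ZMod 2),
              Multiplicative.ofAdd ((1, 0) : ZMod 2 × ZMod 2) *
                Multiplicative.ofAdd ((0, 1) : ZMod 2 × ZMod 2)] :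
              List (Multiplicative (ZMod 2 × ZMod 2))).prod = 1 := by decide
          rw [h1]; exact Subgroup.one_mem _)) = 2 := by
  subst hx hy
  exact ⟨closure_top _, ord_two _⟩

end SingOrbit
end
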